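/- If f(t,x) solves the heat equation ∂_t f = Δf on a locally finite weighted graph satisfying the curvature condition of the paper, and α > 0 is chosen large enough (depending on k, m), then the function F(t,x) = t|∇f|²(t,x) + α f²(t,x) satisfies (∂_t − Δ)F ≤ 0; consequently, by the maximum principle, t|∇f|²(t,x) + α f²(t,x) ≤ α sup_V f₀² for all t ≥ 0, so |∇f|²(t,x) ≤ (α/t) sup_V f₀². -/

import Mathlib

open Finset Real

/-- Graph Laplacian `Δf(x) = (1/d x) * Σ_{y ∈ N x} μ x y * (f y - f x)`. -/
noncomputable def glap {V : Type*} (N : V → Finset V) (μ : V → V → ℝ) (d : V → ℝ)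
    (f : V → ℝ) (x : V) : ℝ :=
  (1 / d x) * ∑ y ∈ N x, μ x y * (f y - f x)

/-- Gradient norm squared `|∇f|²(x)`. -/
noncomputable def ggrad {V : Type*} (N : V → Finset V) (μ : V → V → ℝ) (d : V → ℝ)
    (f : V → ℝ) (x : V) : ℝ :=
  (1 / d x) * ∑ y ∈ N x, μ x y * (f y - f x) ^ 2

/-- Pointwise inner product `(∇f, ∇g)(x)`. -/
noncomputable def ginner {V : Type*} (N : V → Finset V) (μ : V → V → ℝ) (d : V → ℝ)
    (f g : V → ℝ) (x : V) : ℝ :=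
  (1 / d x) * ∑ y ∈ N x, μ x y * (f y - f x) * (g y - g x)

/-- Hessian norm squared `|D²f|²(x)`. -/
noncomputable def ghess {V : Type*} (N : V → Finset V) (μ : V → V → ℝ) (d : V → ℝ)
    (f : V → ℝ) (x : V) : ℝ :=
  (1 / d x) * ∑ y ∈ N x, (μ x y / d y) * ∑ z ∈ N y, μ y z * (f x - 2 * f y + f z) ^ 2

/-- Carré du champ `Γ(f,g)(x) = (1/2)[Δ(fg) - fΔg - gΔf](x)`. -/
noncomputable def ggamma {V : Type*} (N : V → Finset V) (μ : V → V → ℝ) (d : V → ℝ)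
    (f g : V → ℝ) (x : V) : ℝ :=
  (1 / 2) * (glap N μ d (fun y => f y * g y) x - f x * glap N μ d g x - g x * glap N μ d f x)

/-- Iterated carré du champ `Γ₂(f,f)(x) = (1/2)[ΔΓ(f,f) - 2Γ(f,Δf)](x)`. -/
noncomputable def ggamma2 {V : Type*} (N : V → Finset V) (μ : V → V → ℝ) (d : V → ℝ)
    (f : V → ℝ) (x : V) : ℝ :=
  (1 / 2) * (glap N μ d (ggamma N μ d f f) x - 2 * ggamma N μ d f (glap N μ d f) x)

section aux
variable {V : Type*} (N : V → Finset V) (μ : V → V → ℝ) (d : V → ℝ)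

lemma ggamma_half (f g : V → ℝ) (x : V) :
    ggamma N μ d f g x = (1/2) * ginner N μ d f g x := by
  unfold ggamma ginner glap
  have h : ∑ y ∈ N x, μ x y * (f y - f x) * (g y - g x)
      = ∑ y ∈ N x, μ x y * (f y * g y - f x * g x)
        - f x * ∑ y ∈ N x, μ x y * (g y - g x)
        - g x * ∑ y ∈ N x, μ x y * (f y - f x) := by
    rw [Finset.mul_sum, Finset.mul_sum, ← Finset.sum_sub_distrib, ← Finset.sum_sub_distrib]
    exact Finset.sum_congr rfl fun y _ => by ring
  rw [h]; ring

lemma ggrad_eq_ginner (f : V → ℝ) (x : V) :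
    ggrad N μ d f x = ginner N μ d f f x := by
  unfold ggrad ginner
  congr 1
  exact Finset.sum_congr rfl fun y _ => by ring

lemma glap_smul (a : ℝ) (g : V → ℝ) (x : V) :
    glap N μ d (fun y => a * g y) x = a * glap N μ d g x := by
  unfold glap
  rw [Finset.mul_sum, Finset.mul_sum, Finset.mul_sum]
  exact Finset.sum_congr rfl fun y _ => by ring

lemma glap_sq (f : V → ℝ) (x : V) :
    glap N μ d (fun y => f y ^ 2) x = ggrad N μ d f x + 2 * f x * glap N μ d f x := by
  unfold glap ggrad
  have h : ∑ y ∈ N x, μ x y * (f y ^ 2 - f x ^ 2)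
      = ∑ y ∈ N x, μ x y * (f y - f x) ^ 2 + 2 * f x * ∑ y ∈ N x, μ x y * (f y - f x) := by
    rw [Finset.mul_sum, ← Finset.sum_add_distrib]
    exact Finset.sum_congr rfl fun y _ => by ring
  rw [h]; ring

lemma glap_ggrad_eq (f : V → ℝ) (x : V) :
    glap N μ d (ggrad N μ d f) x
      = 4 * ggamma2 N μ d f x + 2 * ginner N μ d f (glap N μ d f) x := by
  have h1 : ggrad N μ d f = fun y => 2 * ggamma N μ d f f y := by
    funext y; rw [ggamma_half, ← ggrad_eq_ginner]; ring
  rw [h1, glap_smul]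
  have h2 : ggamma2 N μ d f x
      = (1 / 2) * (glap N μ d (ggamma N μ d f f) x
        - 2 * ggamma N μ d f (glap N μ d f) x) := rfl
  have h3 := ggamma_half N μ d f (glap N μ d f) x
  linarith

lemma glap_decomp (p q : V → ℝ) (b c : ℝ) (x : V) :
    glap N μ d (fun y => p y + b * q y + c) x
      = glap N μ d p x + b * glap N μ d q x := by
  unfold glap
  have h : ∑ y ∈ N x, μ x y * ((p y + b * q y + c) - (p x + b * q x + c))
      = ∑ y ∈ N x, μ x y * (p y - p x) + b * ∑ y ∈ N x, μ x y * (q y - q x) := by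
    rw [Finset.mul_sum, ← Finset.sum_add_distrib]
    exact Finset.sum_congr rfl fun y _ => by ring
  rw [h]; ring

lemma glap_nonpos_of_max (hnn : ∀ x y, 0 ≤ μ x y) (hdpos : ∀ x, 0 < d x)
    (g : V → ℝ) (x : V) (hmax : ∀ y, g y ≤ g x) :
    glap N μ d g x ≤ 0 := by
  unfold glap
  apply mul_nonpos_of_nonneg_of_nonpos
  · have := hdpos x; positivity
  · exact Finset.sum_nonpos fun y _ =>
      mul_nonpos_of_nonneg_of_nonpos (hnn x y) (by linarith [hmax y])

lemma ggrad_nonneg (hnn : ∀ x y, 0 ≤ μ x y) (hdpos : ∀ x, 0 < d x)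
    (g : V → ℝ) (x : V) : 0 ≤ ggrad N μ d g x := by
  unfold ggrad
  apply mul_nonneg
  · have := hdpos x; positivity
  · exact Finset.sum_nonneg fun y _ => mul_nonneg (hnn x y) (sq_nonneg _)

lemma deriv_nonneg_of_max {g : ℝ → ℝ} {g' t T : ℝ} (hg : HasDerivAt g g' t)
    (ht : 0 < t) (htT : t ≤ T) (hmax : ∀ s ∈ Set.Icc (0:ℝ) T, g s ≤ g t) : 0 ≤ g' := by
  have hslope := hasDerivAt_iff_tendsto_slope.mp hg
  have h2 : Filter.Tendsto (slope g t) (nhdsWithin t (Set.Iio t)) (nhds g') :=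
    hslope.mono_left (nhdsWithin_mono t fun y hy => ne_of_lt hy)
  apply ge_of_tendsto h2
  filter_upwards [Ioo_mem_nhdsLT_of_mem (Set.mem_Ioc.mpr ⟨ht, le_rfl⟩)] with s hs
  have hgs : g s ≤ g t := hmax s ⟨hs.1.le, hs.2.le.trans htT⟩
  rw [slope_def_field]
  exact div_nonneg_iff.mpr (Or.inr ⟨by linarith, by linarith [hs.2]⟩)

lemma ball_fin {V : Type*} (G : SimpleGraph V) (hconn : G.Connected)
    (N : V → Finset V) (hadj : ∀ x y, y ∈ N x ↔ G.Adj x y) (x₀ : V) :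
    ∀ n : ℕ, {x : V | G.dist x x₀ ≤ n}.Finite := by
  intro n
  induction n with
  | zero =>
    apply Set.Finite.subset (Set.finite_singleton x₀)
    intro x hx
    simp only [Set.mem_setOf_eq, Nat.le_zero] at hx
    simp [(hconn.dist_eq_zero_iff).mp hx]
  | succ n ih =>
    apply Set.Finite.subset
      (ih.union (Set.Finite.biUnion ih fun y _ => (N y).finite_toSet))
    intro x hx
    simp only [Set.mem_setOf_eq] at hx
    rcases Nat.lt_or_ge (G.dist x x₀) (n+1) with h | h
    · exact Or.inl (Nat.lt_succ_iff.mp h)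
    · have hne : G.dist x x₀ ≠ 0 := by omega
      obtain ⟨p, hp⟩ := SimpleGraph.exists_walk_of_dist_ne_zero hne
      cases p with
      | nil => simp at hp; simp [SimpleGraph.dist_self] at hne
      | @cons _ b _ ha q =>
        right
        have hb : b ∈ {x : V | G.dist x x₀ ≤ n} := by
          simp only [Set.mem_setOf_eq]
          have := SimpleGraph.dist_le q
          simp [SimpleGraph.Walk.length_cons] at hp
          omega
        exact Set.mem_biUnion hb ((hadj b x).mpr ha.symm)

end aux

/-- Bernstein estimate: under the curvature condition and with
`α > 0` large enough, `F(t,x) = t|∇f|² + α f²` satisfies `(∂ₜ - Δ)F ≤ 0` and, by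
the maximum principle, `t|∇f|²(t,x) + α f(t,x)² ≤ α sup f₀²` for all `t ≥ 0`. -/
theorem stmt19 {V : Type*} (G : SimpleGraph V) [DecidableRel G.Adj]
    (hconn : G.Connected)
    (N : V → Finset V) (μ : V → V → ℝ) (d : V → ℝ)
    (hadj : ∀ x y, y ∈ N x ↔ G.Adj x y)
    (hsym : ∀ x y, μ x y = μ y x) (hnn : ∀ x y, 0 ≤ μ x y)
    (hd : ∀ x, d x = ∑ y ∈ N x, μ x y) (hdpos : ∀ x, 0 < d x)
    (x₀ : V) (C : ℝ) (hC : 0 ≤ C)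
    (hH : ∀ x, glap N μ d (fun y => (G.dist y x₀ : ℝ)) x ≤ C)
    (m k : ℝ) (hm : 0 < m)
    (hcurv : ∀ g : V → ℝ, ∀ x,
      (1 / m) * (glap N μ d g x) ^ 2 + (k / 2) * ggrad N μ d g x ≤ ggamma2 N μ d g x)
    (f : ℝ → V → ℝ)
    (hheat : ∀ x t, HasDerivAt (fun s => f s x) (glap N μ d (f t) x) t)
    (hbdd : ∃ M, ∀ t ≥ (0 : ℝ), ∀ x, |f t x| ≤ M)
    (α : ℝ) (hα : 0 < α)
    (hαbig : ∀ t ≥ (0 : ℝ), 1 + 2 * t * (-k + max (2 - 2 / m) 0) ≤ α) :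
    (∀ t ≥ (0 : ℝ), ∀ x,
      deriv (fun s => s * ggrad N μ d (f s) x + α * (f s x) ^ 2) t
          - glap N μ d (fun y => t * ggrad N μ d (f t) y + α * (f t y) ^ 2) x ≤ 0) ∧
      ∀ M₀ : ℝ, (∀ y, (f 0 y) ^ 2 ≤ M₀) →
        ∀ t ≥ (0 : ℝ), ∀ x, t * ggrad N μ d (f t) x + α * (f t x) ^ 2 ≤ α * M₀ := by
  classical
  obtain ⟨M₁, hM₁⟩ := hbdd
  -- time derivative of F(·,x)
  have hderivF : ∀ (t : ℝ) (x : V),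
      HasDerivAt (fun s => s * ggrad N μ d (f s) x + α * (f s x) ^ 2)
        (ggrad N μ d (f t) x
          + t * (2 * ginner N μ d (f t) (glap N μ d (f t)) x)
          + α * (2 * f t x * glap N μ d (f t) x)) t := by
    intro t x
    have hgr : HasDerivAt (fun s => ggrad N μ d (f s) x)
        (2 * ginner N μ d (f t) (glap N μ d (f t)) x) t := by
      have hsum : HasDerivAt (fun s => ∑ y ∈ N x, μ x y * (f s y - f s x) ^ 2)
          (∑ y ∈ N x, μ x y * (2 * (f t y - f t x)
            * (glap N μ d (f t) y - glap N μ d (f t) x))) t := by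
        apply HasDerivAt.fun_sum
        intro y _
        have h := (((hheat y t).sub (hheat x t)).pow 2).const_mul (μ x y)
        exact h.congr_deriv (by norm_num)
      have h2 := hsum.const_mul (1 / d x)
      have heq : (1 / d x) * (∑ y ∈ N x, μ x y * (2 * (f t y - f t x)
            * (glap N μ d (f t) y - glap N μ d (f t) x)))
          = 2 * ginner N μ d (f t) (glap N μ d (f t)) x := by
        unfold ginner
        rw [Finset.mul_sum, Finset.mul_sum, Finset.mul_sum]
        exact Finset.sum_congr rfl fun y _ => by ring
      rw [heq] at h2
      exact h2
    have hsq : HasDerivAt (fun s => α * (f s x) ^ 2)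
        (α * (2 * f t x * glap N μ d (f t) x)) t := by
      have h := ((hheat x t).pow 2).const_mul α
      exact h.congr_deriv (by norm_num)
    have := ((hasDerivAt_id t).mul hgr).add hsq
    exact this.congr_deriv (by simp only [id_eq]; ring)
  have hgradnn := ggrad_nonneg N μ d hnn hdpos
  -- part 1
  have part1 : ∀ t ≥ (0 : ℝ), ∀ x,
      deriv (fun s => s * ggrad N μ d (f s) x + α * (f s x) ^ 2) t
          - glap N μ d (fun y => t * ggrad N μ d (f t) y + α * (f t y) ^ 2) x ≤ 0 := by
    intro t ht x
    rw [(hderivF t x).deriv]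
    have hlap : glap N μ d (fun y => t * ggrad N μ d (f t) y + α * (f t y) ^ 2) x
        = t * glap N μ d (ggrad N μ d (f t)) x
          + α * (ggrad N μ d (f t) x + 2 * f t x * glap N μ d (f t) x) := by
      have h1 : (fun y => t * ggrad N μ d (f t) y + α * (f t y) ^ 2)
          = fun y => (t * ggrad N μ d (f t) y) + α * ((fun z => f t z ^ 2) y) + 0 := by
        funext y; ring
      rw [h1]
      have h2 := glap_decomp N μ d (fun y => t * ggrad N μ d (f t) y)
        (fun z => f t z ^ 2) α 0 x
      rw [h2, glap_smul N μ d t (ggrad N μ d (f t)) x, glap_sq]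
    rw [hlap, glap_ggrad_eq]
    have hc := hcurv (f t) x
    have hb := hαbig t ht
    have hmax : (0:ℝ) ≤ max (2 - 2 / m) 0 := le_max_right _ _
    have hG := hgradnn (f t) x
    have h1 : t * ((1 / m) * (glap N μ d (f t) x) ^ 2 + (k / 2) * ggrad N μ d (f t) x)
        ≤ t * ggamma2 N μ d (f t) x := mul_le_mul_of_nonneg_left hc ht
    have h2 : 1 - α ≤ 2 * t * k - 2 * t * (max (2 - 2 / m) 0) := by linarith
    have h3 : (1 - α) * ggrad N μ d (f t) x
        ≤ (2 * t * k - 2 * t * (max (2 - 2 / m) 0)) * ggrad N μ d (f t) x :=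
      mul_le_mul_of_nonneg_right h2 hG
    have h4 : 0 ≤ t * (max (2 - 2 / m) 0) * ggrad N μ d (f t) x :=
      mul_nonneg (mul_nonneg ht hmax) hG
    have h5 : 0 ≤ t * ((1 / m) * (glap N μ d (f t) x) ^ 2) :=
      mul_nonneg ht (mul_nonneg (by positivity) (sq_nonneg _))
    nlinarith [h1, h3, h4, h5]
  refine ⟨part1, ?_⟩
  intro M₀ hM₀ T hT xb
  have hM₀0 : 0 ≤ M₀ := le_trans (sq_nonneg _) (hM₀ x₀)
  have hM₁0 : 0 ≤ M₁ := le_trans (abs_nonneg _) (hM₁ 0 le_rfl x₀)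
  set B : ℝ := T * (4 * M₁ ^ 2) + α * M₁ ^ 2 with hB
  have hcontf : ∀ x : V, Continuous fun s => f s x := by
    intro x
    have hdiff : Differentiable ℝ fun s => f s x := fun t => (hheat x t).differentiableAt
    exact hdiff.continuous
  have hFb : ∀ t ∈ Set.Icc (0:ℝ) T, ∀ x,
      t * ggrad N μ d (f t) x + α * (f t x) ^ 2 ≤ B := by
    intro t ht x
    have hgb : ggrad N μ d (f t) x ≤ 4 * M₁ ^ 2 := by
      unfold ggrad
      have hsum : ∑ y ∈ N x, μ x y * (f t y - f t x) ^ 2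
          ≤ ∑ y ∈ N x, μ x y * (4 * M₁ ^ 2) := by
        apply Finset.sum_le_sum
        intro y _
        apply mul_le_mul_of_nonneg_left _ (hnn x y)
        have h1 := abs_le.mp (hM₁ t ht.1 y)
        have h2 := abs_le.mp (hM₁ t ht.1 x)
        nlinarith
      have hdx := hdpos x
      calc (1 / d x) * ∑ y ∈ N x, μ x y * (f t y - f t x) ^ 2
          ≤ (1 / d x) * (d x * (4 * M₁ ^ 2)) := by
            apply mul_le_mul_of_nonneg_left _ (one_div_nonneg.mpr (hdpos x).le)
            rw [hd x, Finset.sum_mul]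
            exact hsum
        _ = 4 * M₁ ^ 2 := by field_simp
    have hf2 : (f t x) ^ 2 ≤ M₁ ^ 2 := by
      have := abs_le.mp (hM₁ t ht.1 x); nlinarith
    have h1 : t * ggrad N μ d (f t) x ≤ T * (4 * M₁ ^ 2) :=
      mul_le_mul ht.2 hgb (hgradnn _ _) (le_trans ht.1 ht.2)
    have h2 : α * (f t x) ^ 2 ≤ α * M₁ ^ 2 := mul_le_mul_of_nonneg_left hf2 hα.le
    rw [hB]; linarith
  have hB0 : 0 ≤ B := by
    refine le_trans ?_ (hFb 0 ⟨le_rfl, hT⟩ x₀)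
    have := hgradnn (f 0) x₀
    nlinarith [sq_nonneg (f 0 x₀)]
  have main : ∀ ε > (0:ℝ),
      T * ggrad N μ d (f T) xb + α * (f T xb) ^ 2
        ≤ α * M₀ + ε * ((C + 1) * T + (G.dist xb x₀ : ℝ)) := by
    intro ε hε
    obtain ⟨R, hR⟩ := exists_nat_gt (B / ε)
    have hRB : B < ε * R := by rw [div_lt_iff₀ hε] at hR; linarith
    have hball := ball_fin G hconn N hadj x₀ R
    set S := hball.toFinset with hS
    have hx₀S : x₀ ∈ S := by
      simp [hS, Set.Finite.mem_toFinset, SimpleGraph.dist_self]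
    set φ : ℝ → V → ℝ := fun t x =>
      t * ggrad N μ d (f t) x + α * (f t x) ^ 2
        - ε * ((C + 1) * t + (G.dist x x₀ : ℝ)) with hφ
    have hout : ∀ t ∈ Set.Icc (0:ℝ) T, ∀ x, x ∉ S → φ t x < 0 := by
      intro t ht x hx
      have hdx : (R : ℝ) < (G.dist x x₀ : ℝ) := by
        have h : ¬ G.dist x x₀ ≤ R := by
          simpa [hS, Set.Finite.mem_toFinset] using hx
        exact_mod_cast Nat.lt_of_not_le h
      have hF := hFb t ht x
      have h1 : ε * (R : ℝ) ≤ ε * (G.dist x x₀ : ℝ) :=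
        mul_le_mul_of_nonneg_left hdx.le hε.le
      have h2 : 0 ≤ ε * ((C + 1) * t) :=
        mul_nonneg hε.le (mul_nonneg (by linarith) ht.1)
      simp only [hφ]
      nlinarith
    have hcontφ : ∀ x : V, Continuous fun t => φ t x := by
      intro x
      have h1 : Continuous fun t => ggrad N μ d (f t) x := by
        unfold ggrad
        exact continuous_const.mul (continuous_finset_sum _ fun y _ =>
          continuous_const.mul (((hcontf y).sub (hcontf x)).pow 2))
      simp only [hφ]
      exact ((continuous_id.mul h1).add
          (continuous_const.mul ((hcontf x).pow 2))).sub
        (continuous_const.mul ((continuous_const.mul continuous_id).add continuous_const))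
    have hargmax : ∀ x : V, ∃ t₀, t₀ ∈ Set.Icc (0:ℝ) T
        ∧ ∀ s ∈ Set.Icc (0:ℝ) T, φ s x ≤ φ t₀ x := by
      intro x
      obtain ⟨t₀, ht₀, hmax⟩ := isCompact_Icc.exists_isMaxOn
        (Set.nonempty_Icc.mpr hT) (hcontφ x).continuousOn
      exact ⟨t₀, ht₀, fun s hs => hmax hs⟩
    choose tm htm hmaxt using hargmax
    obtain ⟨xs, hxsS, hxsmax⟩ := S.exists_max_image (fun x => φ (tm x) x) ⟨x₀, hx₀S⟩
    have h0φ : 0 ≤ φ 0 x₀ := by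
      simp only [hφ, SimpleGraph.dist_self]
      push_cast
      ring_nf
      positivity
    have hxs0 : 0 ≤ φ (tm xs) xs :=
      le_trans (le_trans h0φ (hmaxt x₀ 0 ⟨le_rfl, hT⟩)) (hxsmax x₀ hx₀S)
    have hmaxval : φ (tm xs) xs ≤ α * M₀ := by
      rcases eq_or_lt_of_le (htm xs).1 with h0 | hpos
      · rw [← h0]
        simp only [hφ]
        have h1 : α * (f 0 xs) ^ 2 ≤ α * M₀ := mul_le_mul_of_nonneg_left (hM₀ xs) hα.le
        have h2 : (0:ℝ) ≤ ε * ((C + 1) * 0 + (G.dist xs x₀ : ℝ)) := by positivity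
        nlinarith
      · exfalso
        set t₁ := tm xs with ht₁
        have ht₁Icc := htm xs
        have hfun : (fun s => φ s xs)
            = fun s => (s * ggrad N μ d (f s) xs + α * (f s xs) ^ 2)
              - ε * ((C + 1) * s + (G.dist xs x₀ : ℝ)) := by
          funext s; simp only [hφ]
        have hB' : HasDerivAt (fun s : ℝ => ε * ((C + 1) * s + (G.dist xs x₀ : ℝ)))
            (ε * (C + 1)) t₁ := by
          have h := (((hasDerivAt_id t₁).const_mul (C + 1)).add_const
            ((G.dist xs x₀ : ℝ))).const_mul ε
          exact h.congr_deriv (by ring)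
        have hdφ : HasDerivAt (fun s => φ s xs)
            (ggrad N μ d (f t₁) xs
              + t₁ * (2 * ginner N μ d (f t₁) (glap N μ d (f t₁)) xs)
              + α * (2 * f t₁ xs * glap N μ d (f t₁) xs) - ε * (C + 1)) t₁ := by
          rw [hfun]
          exact (hderivF t₁ xs).sub hB'
        have hD := deriv_nonneg_of_max hdφ hpos ht₁Icc.2 (fun s hs => hmaxt xs s hs)
        have hspmax : ∀ y, φ t₁ y ≤ φ t₁ xs := by
          intro y
          by_cases hyS : y ∈ S
          · exact le_trans (hmaxt y t₁ ht₁Icc) (hxsmax y hyS)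
          · exact le_trans (hout t₁ ht₁Icc y hyS).le hxs0
        have hlapφ : glap N μ d (φ t₁) xs ≤ 0 :=
          glap_nonpos_of_max N μ d hnn hdpos (φ t₁) xs hspmax
        have hdec : glap N μ d (φ t₁) xs
            = glap N μ d (fun y => t₁ * ggrad N μ d (f t₁) y + α * (f t₁ y) ^ 2) xs
              + (-ε) * glap N μ d (fun y => (G.dist y x₀ : ℝ)) xs := by
          have h1 : (φ t₁) = fun y =>
              (t₁ * ggrad N μ d (f t₁) y + α * (f t₁ y) ^ 2)
                + (-ε) * ((G.dist y x₀ : ℝ)) + (-(ε * ((C + 1) * t₁))) := by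
            funext y; simp only [hφ]; ring
          rw [h1, glap_decomp]
        have hp1 := part1 t₁ ht₁Icc.1 xs
        rw [(hderivF t₁ xs).deriv] at hp1
        have hHs : ε * glap N μ d (fun y => (G.dist y x₀ : ℝ)) xs ≤ ε * C :=
          mul_le_mul_of_nonneg_left (hH xs) hε.le
        linarith
    have hφTxb : φ T xb ≤ α * M₀ := by
      by_cases hxbS : xb ∈ S
      · exact le_trans (le_trans (hmaxt xb T ⟨hT, le_rfl⟩) (hxsmax xb hxbS)) hmaxval
      · exact le_trans (hout T ⟨hT, le_rfl⟩ xb hxbS).le (by positivity)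
    simp only [hφ] at hφTxb
    linarith
  set K : ℝ := (C + 1) * T + (G.dist xb x₀ : ℝ) with hK
  have hK0 : 0 ≤ K :=
    add_nonneg (mul_nonneg (by linarith) hT) (Nat.cast_nonneg _)
  by_contra hcon
  push_neg at hcon
  set δ : ℝ := (T * ggrad N μ d (f T) xb + α * (f T xb) ^ 2) - α * M₀ with hδdef
  have hδ : 0 < δ := by simp only [hδdef]; linarith
  have hmain := main (δ / (2 * (K + 1))) (by positivity)
  have hKK : δ / (2 * (K + 1)) * K ≤ δ / 2 := by
    rw [div_mul_eq_mul_div, div_le_div_iff₀ (by positivity) (by norm_num)]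
    nlinarith
  simp only [hδdef] at hKK
  linarith
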